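/- Let 0 < α < 1, β ∈ (0,1] and y ∈ C^{1,β}[0,T]. Then for every grid point t_n = nτ ∈ (0,T], the L1 approximation satisfies |D^α y(t_n) − δ^α_τ y(t_n)| ≤ C·[y']_{C^{0,β}[0,t_n]}·τ^{1+β-α}, where C = (1-n^{-α})/(4(β+1)Γ(1-α)) + α/Γ(3-α). -/

import Mathlib

open Real Set

/-- The piecewise linear interpolant of `y` on the uniform grid `t_j = j τ`. -/
noncomputable def linInterp (τ : ℝ) (y : ℝ → ℝ) (t : ℝ) : ℝ :=
  (t - (⌊t / τ⌋ : ℝ) * τ) / τ * y (((⌊t / τ⌋ : ℝ) + 1) * τ)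
    + (((⌊t / τ⌋ : ℝ) + 1) * τ - t) / τ * y ((⌊t / τ⌋ : ℝ) * τ)

/-- The Caputo derivative of order `α` (in the non-local difference form). -/
noncomputable def caputo (α : ℝ) (y : ℝ → ℝ) (t : ℝ) : ℝ :=
  (1 / Real.Gamma (1 - α)) * (y t - y 0) / t ^ α
    + (α / Real.Gamma (1 - α)) * ∫ s in (0:ℝ)..t, (y t - y s) / (t - s) ^ (1 + α)

open MeasureTheory intervalIntegral

lemma floor_eq_of_Ico {τ : ℝ} (hτ : 0 < τ) {j : ℕ} {s : ℝ}
    (hs : s ∈ Ico ((j:ℝ)*τ) (((j:ℝ)+1)*τ)) : ⌊s/τ⌋ = (j:ℤ) := by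
  rw [Int.floor_eq_iff]
  constructor
  · rw [Int.cast_natCast, le_div_iff₀ hτ]; exact hs.1
  · rw [div_lt_iff₀ hτ]; push_cast; exact hs.2

lemma linInterp_eval {τ : ℝ} (hτ : 0 < τ) (y : ℝ → ℝ) {j : ℕ} {s : ℝ}
    (hs : s ∈ Ico ((j:ℝ)*τ) (((j:ℝ)+1)*τ)) :
    linInterp τ y s = (s - (j:ℝ)*τ) / τ * y (((j:ℝ)+1)*τ)
      + (((j:ℝ)+1)*τ - s) / τ * y ((j:ℝ)*τ) := by
  unfold linInterp
  rw [floor_eq_of_Ico hτ hs]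
  push_cast
  ring_nf

lemma linInterp_grid {τ : ℝ} (hτ : 0 < τ) (y : ℝ → ℝ) (j : ℕ) :
    linInterp τ y ((j:ℝ)*τ) = y ((j:ℝ)*τ) := by
  have hs : (j:ℝ)*τ ∈ Ico ((j:ℝ)*τ) (((j:ℝ)+1)*τ) :=
    ⟨le_refl _, by nlinarith⟩
  rw [linInterp_eval hτ y hs]
  have : ((j:ℝ)+1)*τ - (j:ℝ)*τ = τ := by ring
  rw [sub_self, this, zero_div, zero_mul, div_self hτ.ne', zero_add, one_mul]

lemma linInterp_zero {τ : ℝ} (hτ : 0 < τ) (y : ℝ → ℝ) :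
    linInterp τ y 0 = y 0 := by
  have := linInterp_grid hτ y 0
  simpa using this

lemma holder_continuousOn {H β tn : ℝ} {y' : ℝ → ℝ} (hβ : 0 < β)
    (hHolder : ∀ s ∈ Icc (0:ℝ) tn, ∀ t ∈ Icc (0:ℝ) tn, |y' t - y' s| ≤ H * |t - s| ^ β) :
    ContinuousOn y' (Icc 0 tn) := by
  intro u hu
  have hb : Filter.Tendsto (fun v : ℝ => H * |v - u| ^ β) (nhdsWithin u (Icc 0 tn)) (nhds 0) := by
    have hc : ContinuousAt (fun v : ℝ => H * |v - u| ^ β) u := by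
      have h1 : ContinuousAt (fun v : ℝ => |v - u|) u :=
        (continuous_abs.comp (continuous_sub_right u)).continuousAt
      exact continuousAt_const.mul (h1.rpow_const (Or.inr hβ.le))
    have hval : H * |u - u| ^ β = 0 := by
      simp [Real.zero_rpow hβ.ne']
    have := hc.continuousWithinAt (s := Icc 0 tn)
    rw [ContinuousWithinAt, hval] at this
    exact this
  rw [ContinuousWithinAt, tendsto_iff_dist_tendsto_zero]
  apply squeeze_zero' (eventually_nhdsWithin_of_forall fun v _ => dist_nonneg)
    (eventually_nhdsWithin_of_forall fun v hv => ?_) hb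
  rw [Real.dist_eq]
  exact hHolder u hu v hv

lemma interp_err (T β H τ : ℝ) (y y' : ℝ → ℝ) (n : ℕ)
    (hβ : β ∈ Ioc (0:ℝ) 1) (hτ : 0 < τ) (hH : 0 ≤ H) (hT : (n : ℝ) * τ ≤ T)
    (hderiv : ∀ u ∈ Icc (0:ℝ) T, HasDerivAt y (y' u) u)
    (hHolder : ∀ s ∈ Icc (0:ℝ) ((n : ℝ) * τ), ∀ t ∈ Icc (0:ℝ) ((n : ℝ) * τ),
        |y' t - y' s| ≤ H * |t - s| ^ β)
    {j : ℕ} (hj : j + 1 ≤ n) {s : ℝ} (hs : s ∈ Ico ((j:ℝ)*τ) (((j:ℝ)+1)*τ)) :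
    |linInterp τ y s - y s|
      ≤ H * τ ^ β / ((β+1)*τ) * ((s - (j:ℝ)*τ) * ((((j:ℝ)+1)*τ) - s)) := by
  set a : ℝ := (j:ℝ)*τ with ha_def
  set b : ℝ := ((j:ℝ)+1)*τ with hb_def
  set x : ℝ := s - a with hx_def
  set z : ℝ := b - s with hz_def
  have hx0 : 0 ≤ x := sub_nonneg.2 hs.1
  have hz0 : 0 < z := sub_pos.2 hs.2
  have hxz : x + z = τ := by simp only [hx_def, hz_def, ha_def, hb_def]; ring
  have ha0 : 0 ≤ a := by positivity
  have hbn : b ≤ (n:ℝ)*τ := by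
    have : ((j:ℝ)+1) ≤ (n:ℝ) := by exact_mod_cast hj
    nlinarith
  have hsub : Icc a b ⊆ Icc 0 ((n:ℝ)*τ) :=
    Icc_subset_Icc ha0 hbn
  have hsubT : Icc (0:ℝ) ((n:ℝ)*τ) ⊆ Icc 0 T := Icc_subset_Icc le_rfl hT
  have hsa : a ≤ s := hs.1
  have hsb : s ≤ b := hs.2.le
  have ycont : ContinuousOn y' (Icc 0 ((n:ℝ)*τ)) := holder_continuousOn hβ.1 hHolder
  have hyint : ∀ c d, c ∈ Icc a b → d ∈ Icc a b →
      IntervalIntegrable y' volume c d := by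
    intro c d hc hd
    apply ContinuousOn.intervalIntegrable
    apply ycont.mono
    intro u hu
    rcases Set.uIcc_subset_Icc (hsub hc) (hsub hd) hu with h
    exact h
  -- FTC on [s,b] and [a,s]
  have hftc1 : ∫ u in s..b, y' u = y b - y s := by
    apply integral_eq_sub_of_hasDerivAt
    · intro u hu
      have := Set.uIcc_subset_Icc (hsub ⟨hsa, hsb⟩) (hsub ⟨le_trans hsa hsb, le_refl b⟩) hu
      exact hderiv u (hsubT this)
    · exact hyint s b ⟨hsa, hsb⟩ ⟨le_trans hsa hsb, le_refl b⟩
  have hftc2 : ∫ u in a..s, y' u = y s - y a := by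
    apply integral_eq_sub_of_hasDerivAt
    · intro u hu
      have := Set.uIcc_subset_Icc (hsub ⟨le_refl a, le_trans hsa hsb⟩) (hsub ⟨hsa, hsb⟩) hu
      exact hderiv u (hsubT this)
    · exact hyint a s ⟨le_refl a, le_trans hsa hsb⟩ ⟨hsa, hsb⟩
  -- parametrized representations
  have hrep1 : y b - y s = z * ∫ t in (0:ℝ)..1, y' (z*t + s) := by
    rw [integral_comp_mul_add y' hz0.ne' s]
    rw [mul_zero, zero_add, mul_one]
    rw [smul_eq_mul, ← mul_assoc, mul_inv_cancel₀ hz0.ne', one_mul]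
    rw [show z + s = b by simp only [hz_def]; ring, hftc1]
  have hrep2 : y s - y a = x * ∫ t in (0:ℝ)..1, y' (-x*t + s) := by
    rcases eq_or_lt_of_le hx0 with hx | hx
    · rw [← hx, zero_mul]
      have : a = s := by simp [hx_def] at hx; linarith
      rw [this, sub_self]
    · rw [integral_comp_mul_add y' (neg_ne_zero.2 hx.ne') s]
      rw [mul_zero, zero_add, mul_one, smul_eq_mul]
      rw [show -x + s = a by simp only [hx_def]; ring]
      rw [integral_symm a s, hftc2]
      field_simp [hx.ne']
  -- value of interpolant
  have heval : linInterp τ y s - y s = (x/τ) * (y b - y s) - (z/τ) * (y s - y a) := by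
    rw [linInterp_eval hτ y hs]
    have h1 : x/τ + z/τ = 1 := by
      rw [← add_div, hxz, div_self hτ.ne']
    field_simp
    ring_nf
    simp only [hx_def, hz_def, ha_def, hb_def]
    ring
  -- integrability of the parametrized integrands
  have hmap1 : ∀ t ∈ Icc (0:ℝ) 1, z*t + s ∈ Icc 0 ((n:ℝ)*τ) := by
    intro t ht
    constructor
    · have h0s : 0 ≤ s := le_trans ha0 hsa
      nlinarith [ht.1, hz0.le]
    · have : z*t ≤ z := by nlinarith [ht.1, ht.2, hz0.le]
      have : z*t + s ≤ b := by simp only [hz_def] at this ⊢; linarith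
      linarith [hbn]
  have hmap2 : ∀ t ∈ Icc (0:ℝ) 1, -x*t + s ∈ Icc 0 ((n:ℝ)*τ) := by
    intro t ht
    constructor
    · have : x*t ≤ x := by nlinarith [ht.1, ht.2, hx0]
      have h2 : a ≤ -x*t + s := by simp only [hx_def] at this ⊢; linarith
      linarith [ha0]
    · have : 0 ≤ x*t := mul_nonneg hx0 ht.1
      have h0s : s ≤ (n:ℝ)*τ := le_trans hsb hbn
      linarith
  have hint1 : IntervalIntegrable (fun t => y' (z*t + s)) volume 0 1 := by
    apply ContinuousOn.intervalIntegrable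
    rw [uIcc_of_le zero_le_one]
    exact ycont.comp ((continuous_const.mul continuous_id').add continuous_const).continuousOn
      (fun t ht => hmap1 t ht)
  have hint2 : IntervalIntegrable (fun t => y' (-x*t + s)) volume 0 1 := by
    apply ContinuousOn.intervalIntegrable
    rw [uIcc_of_le zero_le_one]
    exact ycont.comp ((continuous_const.mul continuous_id').add continuous_const).continuousOn
      (fun t ht => hmap2 t ht)
  have hcomb : linInterp τ y s - y s
      = (x*z/τ) * ∫ t in (0:ℝ)..1, (y' (z*t + s) - y' (-x*t + s)) := by
    rw [heval, hrep1, hrep2, integral_sub hint1 hint2]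
    ring
  have hβ1 : (0:ℝ) < β + 1 := by linarith [hβ.1]
  have hgint : IntervalIntegrable (fun t : ℝ => H * τ^β * t^β) volume 0 1 :=
    (intervalIntegrable_rpow' (by linarith [hβ.1])).const_mul _
  have hJ : |∫ t in (0:ℝ)..1, (y' (z*t + s) - y' (-x*t + s))| ≤ H * τ^β / (β+1) := by
    have hb : ∀ᵐ t ∂(volume.restrict (Set.uIoc (0:ℝ) 1)),
        ‖y' (z*t + s) - y' (-x*t + s)‖ ≤ H * τ^β * t^β := by
      apply ae_restrict_of_forall_mem measurableSet_uIoc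
      intro t ht
      rw [Set.uIoc_of_le zero_le_one] at ht
      have ht' : t ∈ Icc (0:ℝ) 1 := ⟨ht.1.le, ht.2⟩
      have := hHolder (-x*t + s) (hmap2 t ht') (z*t + s) (hmap1 t ht')
      rw [Real.norm_eq_abs]
      have harg : z*t + s - (-x*t + s) = τ * t := by
        rw [← hxz]; ring
      rw [harg] at this
      rw [abs_of_nonneg (mul_nonneg hτ.le ht.1.le)] at this
      rwa [Real.mul_rpow hτ.le ht.1.le, ← mul_assoc] at this
    have := intervalIntegral.norm_integral_le_of_norm_le zero_le_one
      ((ae_restrict_iff' measurableSet_Ioc).1 (by rwa [Set.uIoc_of_le zero_le_one] at hb)) hgint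
    rw [Real.norm_eq_abs] at this
    apply le_trans this
    rw [intervalIntegral.integral_const_mul, integral_rpow (Or.inl (by linarith [hβ.1] : (-1:ℝ) < β))]
    rw [Real.one_rpow, Real.zero_rpow hβ1.ne']
    rw [mul_div_assoc]
    apply le_of_eq
    ring
  rw [hcomb, abs_mul, abs_of_nonneg (by positivity : (0:ℝ) ≤ x*z/τ)]
  calc x*z/τ * |∫ t in (0:ℝ)..1, (y' (z*t + s) - y' (-x*t + s))|
      ≤ x*z/τ * (H * τ^β / (β+1)) := by
        apply mul_le_mul_of_nonneg_left hJ (by positivity)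
    _ = H * τ^β / ((β+1)*τ) * (x*z) := by
        field_simp

set_option maxHeartbeats 2000000 in
/-- L1 truncation error for C^{1,β} functions, with explicit constant. -/
theorem L1_truncation_C1_holder
    (T α β H τ : ℝ) (y y' : ℝ → ℝ) (n : ℕ)
    (hα : α ∈ Ioo (0:ℝ) 1) (hβ : β ∈ Ioc (0:ℝ) 1) (hτ : 0 < τ) (hH : 0 ≤ H)
    (hn : 1 ≤ n) (hT : (n : ℝ) * τ ≤ T)
    (hderiv : ∀ u ∈ Icc (0:ℝ) T, HasDerivAt y (y' u) u)
    (hHolder : ∀ s ∈ Icc (0:ℝ) ((n : ℝ) * τ), ∀ t ∈ Icc (0:ℝ) ((n : ℝ) * τ),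
        |y' t - y' s| ≤ H * |t - s| ^ β) :
    |caputo α y ((n : ℝ) * τ) - caputo α (linInterp τ y) ((n : ℝ) * τ)|
      ≤ ((1 - (n : ℝ) ^ (-α)) / (4 * (β + 1) * Real.Gamma (1 - α))
          + α / Real.Gamma (3 - α))
        * H * τ ^ (1 + β - α) := by
  obtain ⟨hα0, hα1⟩ := hα
  have hβ0 := hβ.1
  have hn1 : (1:ℝ) ≤ (n:ℝ) := by exact_mod_cast hn
  set tn : ℝ := (n:ℝ)*τ with htn_def
  have htn0 : 0 < tn := by nlinarith
  have hτtn : τ ≤ tn := by nlinarith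
  set tm : ℝ := tn - τ with htm_def
  have htm0 : 0 ≤ tm := by simp only [htm_def]; linarith
  have htmtn : tm ≤ tn := by simp only [htm_def]; linarith
  have hΓpos : 0 < Real.Gamma (1 - α) := Real.Gamma_pos_of_pos (by linarith)
  set Iy := linInterp τ y with hIy_def
  have hIy0 : Iy 0 = y 0 := linInterp_zero hτ y
  have hIytn : Iy tn = y tn := by
    simp only [hIy_def, htn_def]; exact linInterp_grid hτ y n
  -- covering of [0,tn) by grid intervals
  have hcover : ∀ s ∈ Ico (0:ℝ) tn,
      ∃ j : ℕ, j + 1 ≤ n ∧ s ∈ Ico ((j:ℝ)*τ) (((j:ℝ)+1)*τ) := by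
    intro s hs
    have hfl0 : 0 ≤ ⌊s/τ⌋ := Int.floor_nonneg.2 (div_nonneg hs.1 hτ.le)
    refine ⟨⌊s/τ⌋.toNat, ?_, ?_, ?_⟩
    · have hcast : ((⌊s/τ⌋.toNat : ℕ) : ℝ) = ((⌊s/τ⌋ : ℤ) : ℝ) := by
        exact_mod_cast Int.toNat_of_nonneg hfl0
      have h1 : ((⌊s/τ⌋ : ℤ) : ℝ) * τ ≤ s := by
        rw [← le_div_iff₀ hτ]; exact Int.floor_le _
      have h2 : ((⌊s/τ⌋.toNat : ℕ) : ℝ) < (n:ℝ) := by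
        rw [hcast]; by_contra hc; push_neg at hc
        have : (n:ℝ)*τ ≤ ((⌊s/τ⌋ : ℤ) : ℝ) * τ := by nlinarith
        have := lt_of_lt_of_le hs.2 this
        linarith [h1]
      have : ⌊s/τ⌋.toNat < n := by exact_mod_cast h2
      omega
    · have h1 : ((⌊s/τ⌋ : ℤ) : ℝ) * τ ≤ s := by
        rw [← le_div_iff₀ hτ]; exact Int.floor_le _
      have hcast : ((⌊s/τ⌋.toNat : ℕ) : ℝ) = ((⌊s/τ⌋ : ℤ) : ℝ) := by
        exact_mod_cast Int.toNat_of_nonneg hfl0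
      rw [hcast]; exact h1
    · have h2 : s/τ < (⌊s/τ⌋ : ℤ) + 1 := Int.lt_floor_add_one _
      have hcast : ((⌊s/τ⌋.toNat : ℕ) : ℝ) = ((⌊s/τ⌋ : ℤ) : ℝ) := by
        exact_mod_cast Int.toNat_of_nonneg hfl0
      rw [hcast]
      rw [div_lt_iff₀ hτ] at h2
      push_cast at h2 ⊢
      nlinarith
  -- continuity facts
  have hycont : ContinuousOn y (Icc 0 T) :=
    fun u hu => (hderiv u hu).continuousAt.continuousWithinAt
  have hsubT : Icc (0:ℝ) tn ⊆ Icc 0 T := Icc_subset_Icc le_rfl hT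
  have ycont' : ContinuousOn y' (Icc 0 tn) := holder_continuousOn hβ0 hHolder
  -- Lipschitz bound for y on [0,tn]
  set L : ℝ := |y' 0| + H * tn ^ β with hL_def
  have h0mem : (0:ℝ) ∈ Icc (0:ℝ) tn := ⟨le_rfl, htn0.le⟩
  have hy'L : ∀ u ∈ Icc (0:ℝ) tn, ‖y' u‖ ≤ L := by
    intro u hu
    rw [Real.norm_eq_abs]
    have h1 := hHolder 0 h0mem u hu
    have h2 : |u - 0| ^ β ≤ tn ^ β := by
      rw [sub_zero, abs_of_nonneg hu.1]
      exact Real.rpow_le_rpow hu.1 hu.2 hβ0.le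
    calc |y' u| ≤ |y' 0| + |y' u - y' 0| := by
          have := abs_sub_abs_le_abs_sub (y' u) (y' 0); linarith
      _ ≤ |y' 0| + H * tn ^ β := by nlinarith [h1, h2, abs_nonneg (y' u - y' 0)]
      _ = L := rfl
  have hyLip : ∀ s ∈ Icc (0:ℝ) tn, |y tn - y s| ≤ L * (tn - s) := by
    intro s hs
    have key := Convex.norm_image_sub_le_of_norm_hasDerivWithin_le
      (f := y) (f' := y') (s := Icc (0:ℝ) tn) (C := L)
      (fun u hu => (hderiv u (hsubT hu)).hasDerivWithinAt) hy'L (convex_Icc _ _)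
      hs ⟨htn0.le, le_rfl⟩
    rw [Real.norm_eq_abs, Real.norm_eq_abs, abs_of_nonneg (sub_nonneg.2 hs.2)] at key
    exact key
  -- rpow helpers
  have hpow1 : ∀ w : ℝ, 0 ≤ w → w * w ^ (-(1+α)) = w ^ (-α) := by
    intro w hw
    rcases eq_or_lt_of_le hw with hw0 | hw0
    · rw [← hw0, Real.zero_rpow (by linarith : -α ≠ 0), zero_mul]
    · rw [show (-α) = 1 + -(1+α) by ring, Real.rpow_add hw0, Real.rpow_one]
  have hpow2 : ∀ w : ℝ, 0 ≤ w → w * w ^ (-α) = w ^ (1-α) := by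
    intro w hw
    rcases eq_or_lt_of_le hw with hw0 | hw0
    · rw [← hw0, Real.zero_rpow (by linarith : (1:ℝ)-α ≠ 0), zero_mul]
    · rw [show (1-α) = 1 + -α by ring, Real.rpow_add hw0, Real.rpow_one]
  -- error bounds
  set c2 : ℝ := H * τ^β / ((β+1)*τ) with hc2_def
  have hc2nn : 0 ≤ c2 := by
    apply div_nonneg (mul_nonneg hH (Real.rpow_nonneg hτ.le _))
    nlinarith
  have herr : ∀ j : ℕ, j + 1 ≤ n → ∀ s ∈ Ico ((j:ℝ)*τ) (((j:ℝ)+1)*τ),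
      |Iy s - y s| ≤ c2 * ((s - (j:ℝ)*τ) * ((((j:ℝ)+1)*τ) - s)) :=
    fun j hj s hs => interp_err T β H τ y y' n hβ hτ hH hT hderiv hHolder hj hs
  set E0 : ℝ := H * τ^(1+β) / (4*(β+1)) with hE0_def
  have hE0nn : 0 ≤ E0 := by
    apply div_nonneg (mul_nonneg hH (Real.rpow_nonneg hτ.le _))
    nlinarith
  have hE0c2 : c2 * (τ^2/4) = E0 := by
    simp only [hc2_def, hE0_def]
    rw [show (1+β) = β + 1 by ring, Real.rpow_add hτ, Real.rpow_one]
    field_simp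
  have hE1 : ∀ s ∈ Icc (0:ℝ) tn, |Iy s - y s| ≤ E0 := by
    intro s hs
    rcases eq_or_lt_of_le hs.2 with hstn | hstn
    · rw [hstn, hIytn, sub_self, abs_zero]; exact hE0nn
    · obtain ⟨j, hj, hsj⟩ := hcover s ⟨hs.1, hstn⟩
      calc |Iy s - y s| ≤ c2 * ((s - (j:ℝ)*τ) * ((((j:ℝ)+1)*τ) - s)) := herr j hj s hsj
        _ ≤ c2 * (τ^2/4) := by
            apply mul_le_mul_of_nonneg_left _ hc2nn
            nlinarith [hsj.1, hsj.2, sq_nonneg ((s - (j:ℝ)*τ) - ((((j:ℝ)+1)*τ) - s))]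
        _ = E0 := hE0c2
  have hE2 : ∀ s ∈ Icc (0:ℝ) tn, |Iy s - y s| ≤ (H * τ^β/(β+1)) * (tn - s) := by
    intro s hs
    rcases eq_or_lt_of_le hs.2 with hstn | hstn
    · rw [hstn, hIytn, sub_self, abs_zero, sub_self, mul_zero]
    · obtain ⟨j, hj, hsj⟩ := hcover s ⟨hs.1, hstn⟩
      have hzn : (((j:ℝ)+1)*τ) - s ≤ tn - s := by
        have : ((j:ℝ)+1) ≤ (n:ℝ) := by exact_mod_cast hj
        simp only [htn_def]; nlinarith
      calc |Iy s - y s| ≤ c2 * ((s - (j:ℝ)*τ) * ((((j:ℝ)+1)*τ) - s)) := herr j hj s hsj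
        _ ≤ c2 * (τ * (tn - s)) := by
            apply mul_le_mul_of_nonneg_left _ hc2nn
            have h1 : s - (j:ℝ)*τ ≤ τ := by nlinarith [hsj.2]
            have h2 : 0 ≤ (((j:ℝ)+1)*τ) - s := le_of_lt (sub_pos.2 hsj.2)
            have h3 : 0 ≤ s - (j:ℝ)*τ := sub_nonneg.2 hsj.1
            nlinarith [hzn]
        _ = (H * τ^β/(β+1)) * (tn - s) := by
            simp only [hc2_def]; field_simp
  -- integrand functions
  set K : ℝ → ℝ := fun s => (tn - s) ^ (-(1+α)) with hK_def
  have hKnn : ∀ s ∈ Icc (0:ℝ) tn, 0 ≤ K s :=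
    fun s hs => Real.rpow_nonneg (by linarith [hs.2]) _
  set f : ℝ → ℝ := fun s => (y tn - y s) * K s with hf_def
  set g : ℝ → ℝ := fun s => (y tn - Iy s) * K s with hg_def
  set e : ℝ → ℝ := fun s => (Iy s - y s) * K s with he_def
  -- rewrite caputo difference
  have hdivK : ∀ w : ℝ → ℝ, EqOn (fun s => (w tn - w s)/(tn - s)^(1+α))
      (fun s => (w tn - w s) * K s) (uIcc 0 tn) := by
    intro w s hs
    rw [uIcc_of_le htn0.le] at hs
    simp only [hK_def]
    rw [Real.rpow_neg (by linarith [hs.2] : (0:ℝ) ≤ tn - s), div_eq_mul_inv]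
  have hcap : caputo α y tn - caputo α Iy tn
      = (α / Real.Gamma (1-α)) * ((∫ s in (0:ℝ)..tn, f s) - ∫ s in (0:ℝ)..tn, g s) := by
    unfold caputo
    rw [integral_congr (hdivK y), integral_congr (hdivK Iy), hIytn, hIy0]
    simp only [hf_def, hg_def]
    ring
  -- kernel integrability
  have hKD : ∀ r : ℝ, -1 < r → IntervalIntegrable (fun s => (tn - s) ^ r) volume 0 tn := by
    intro r hr
    have h1 := (intervalIntegrable_rpow' (a := 0) (b := tn) hr).comp_sub_left tn
    simpa using h1.symm
  have hfi : IntervalIntegrable f volume 0 tn := by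
    rw [intervalIntegrable_iff_integrableOn_Ioo_of_le htn0.le]
    have hdom : IntegrableOn (fun s => L * (tn - s)^(-α)) (Ioo 0 tn) volume := by
      have h2 := (hKD (-α) (by linarith)).const_mul L
      rw [intervalIntegrable_iff_integrableOn_Ioo_of_le htn0.le] at h2
      exact h2
    apply MeasureTheory.Integrable.mono' hdom ?_ ?_
    · apply ContinuousOn.aestronglyMeasurable ?_ measurableSet_Ioo
      simp only [hf_def, hK_def]
      apply ContinuousOn.mul
      · exact continuousOn_const.sub (hycont.mono (fun u hu => hsubT ⟨hu.1.le, hu.2.le⟩))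
      · intro s hs
        have h2 : ContinuousAt (fun u : ℝ => tn - u) s :=
          (continuous_const.sub continuous_id).continuousAt
        exact (h2.rpow_const (Or.inl (by linarith [hs.2] : tn - s ≠ 0))).continuousWithinAt
    · apply ae_restrict_of_forall_mem measurableSet_Ioo
      intro s hs
      have hs' : s ∈ Icc (0:ℝ) tn := ⟨hs.1.le, hs.2.le⟩
      rw [Real.norm_eq_abs, (by simp only [hf_def] : f s = (y tn - y s) * K s), abs_mul,
        abs_of_nonneg (hKnn s hs')]
      calc |y tn - y s| * K s ≤ (L * (tn - s)) * K s :=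
            mul_le_mul_of_nonneg_right (hyLip s hs') (hKnn s hs')
        _ = L * (tn - s)^(-α) := by
            simp only [hK_def]; rw [mul_assoc, hpow1 (tn - s) (by linarith [hs'.2])]
  have hgrid : (Ioo (0:ℝ) tn \ ⋃ j ∈ Finset.range n, Ioo ((j:ℝ)*τ) (((j:ℝ)+1)*τ))
      ⊆ ⋃ j ∈ Finset.range (n+1), {((j:ℝ)*τ)} := by
    rintro s ⟨hs1, hs2⟩
    obtain ⟨j, hj, hsj⟩ := hcover s ⟨hs1.1.le, hs1.2⟩
    rcases eq_or_lt_of_le hsj.1 with heq | hlt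
    · simp only [mem_iUnion, mem_singleton_iff]
      exact ⟨j, by simp only [Finset.mem_range]; omega, heq.symm⟩
    · exfalso
      apply hs2
      simp only [mem_iUnion]
      exact ⟨j, by simp only [Finset.mem_range]; omega, hlt, hsj.2⟩
  have hei : IntervalIntegrable e volume 0 tn := by
    rw [intervalIntegrable_iff_integrableOn_Ioo_of_le htn0.le]
    have hdom2 : IntegrableOn (fun s => (H * τ^β/(β+1)) * (tn - s)^(-α)) (Ioo 0 tn) volume := by
      have h2 := (hKD (-α) (by linarith)).const_mul (H * τ^β/(β+1))
      rw [intervalIntegrable_iff_integrableOn_Ioo_of_le htn0.le] at h2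
      exact h2
    have hpiece : ∀ j ∈ Finset.range n,
        IntegrableOn e (Ioo ((j:ℝ)*τ) (((j:ℝ)+1)*τ)) volume := by
      intro j hjr
      rw [Finset.mem_range] at hjr
      have hj1n : ((j:ℝ)+1) ≤ (n:ℝ) := by exact_mod_cast hjr
      have hsubIoo : Ioo ((j:ℝ)*τ) (((j:ℝ)+1)*τ) ⊆ Ioo 0 tn := by
        intro u hu
        constructor
        · have h3 : 0 ≤ (j:ℝ)*τ := by positivity
          linarith [hu.1]
        · have h3 : ((j:ℝ)+1)*τ ≤ tn := by simp only [htn_def]; nlinarith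
          linarith [hu.2]
      apply MeasureTheory.Integrable.mono' (hdom2.mono_set hsubIoo) ?_ ?_
      · apply ContinuousOn.aestronglyMeasurable ?_ measurableSet_Ioo
        have heqn : EqOn e (fun s => ((s - (j:ℝ)*τ)/τ * y (((j:ℝ)+1)*τ)
            + (((j:ℝ)+1)*τ - s)/τ * y ((j:ℝ)*τ) - y s) * (tn - s)^(-(1+α)))
            (Ioo ((j:ℝ)*τ) (((j:ℝ)+1)*τ)) := by
          intro s hs
          simp only [he_def, hK_def, hIy_def]
          rw [linInterp_eval hτ y ⟨hs.1.le, hs.2⟩]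
        apply ContinuousOn.congr ?_ heqn
        apply ContinuousOn.mul
        · apply ContinuousOn.sub
          · apply Continuous.continuousOn
            continuity
          · exact hycont.mono (fun u hu => hsubT ⟨(hsubIoo hu).1.le, (hsubIoo hu).2.le⟩)
        · intro s hs
          have h2 : ContinuousAt (fun u : ℝ => tn - u) s :=
            (continuous_const.sub continuous_id).continuousAt
          exact (h2.rpow_const (Or.inl (by linarith [(hsubIoo hs).2] : tn - s ≠ 0))).continuousWithinAt
      · apply ae_restrict_of_forall_mem measurableSet_Ioo
        intro s hs
        have hs' : s ∈ Icc (0:ℝ) tn := ⟨(hsubIoo hs).1.le, (hsubIoo hs).2.le⟩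
        rw [Real.norm_eq_abs, (by simp only [he_def] : e s = (Iy s - y s) * K s), abs_mul,
          abs_of_nonneg (hKnn s hs')]
        calc |Iy s - y s| * K s ≤ ((H * τ^β/(β+1)) * (tn - s)) * K s :=
              mul_le_mul_of_nonneg_right (hE2 s hs') (hKnn s hs')
          _ = (H * τ^β/(β+1)) * (tn - s)^(-α) := by
              simp only [hK_def]; rw [mul_assoc, hpow1 (tn - s) (by linarith [hs'.2])]
    have hunion : IntegrableOn e (⋃ j ∈ Finset.range n, Ioo ((j:ℝ)*τ) (((j:ℝ)+1)*τ)) volume :=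
      (MeasureTheory.integrableOn_finset_iUnion).2 hpiece
    apply hunion.mono_set_ae
    rw [MeasureTheory.ae_le_set]
    apply measure_mono_null hgrid
    apply Set.Countable.measure_zero
    exact Set.Countable.biUnion (Set.to_countable _) (fun j _ => Set.countable_singleton _)
  have hgi : IntervalIntegrable g volume 0 tn := by
    have hge : g = fun s => f s - e s := by
      funext s; simp only [hg_def, hf_def, he_def]; ring
    rw [hge]; exact hfi.sub hei
  have hsplit : (∫ s in (0:ℝ)..tn, f s) - ∫ s in (0:ℝ)..tn, g s = ∫ s in (0:ℝ)..tn, e s := by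
    rw [← integral_sub hfi hgi]
    apply integral_congr
    intro s _
    simp only [hf_def, hg_def, he_def]
    ring
  -- split the integral at tm
  have hsub01 : uIcc (0:ℝ) tm ⊆ uIcc (0:ℝ) tn := by
    rw [Set.uIcc_of_le htm0, Set.uIcc_of_le htn0.le]
    exact Icc_subset_Icc le_rfl htmtn
  have hsub2 : uIcc tm tn ⊆ uIcc (0:ℝ) tn := by
    rw [Set.uIcc_of_le htmtn, Set.uIcc_of_le htn0.le]
    exact Icc_subset_Icc htm0 le_rfl
  have hm1 : IntervalIntegrable e volume 0 tm := hei.mono_set hsub01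
  have hm2 : IntervalIntegrable e volume tm tn := hei.mono_set hsub2
  have hadd : (∫ s in (0:ℝ)..tn, e s) = (∫ s in (0:ℝ)..tm, e s) + ∫ s in tm..tn, e s :=
    (integral_add_adjacent_intervals hm1 hm2).symm
  -- first piece
  have hI1 : |∫ s in (0:ℝ)..tm, e s| ≤ E0 * ((τ^(-α) - tn^(-α))/α) := by
    have hDcont : ContinuousOn (fun s => E0 * (tn - s)^(-(1+α))) (uIcc 0 tm) := by
      rw [Set.uIcc_of_le htm0]
      intro s hs
      have h2 : ContinuousAt (fun u : ℝ => tn - u) s :=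
        (continuous_const.sub continuous_id).continuousAt
      have h3 : tn - s ≠ 0 := by
        have h4 := hs.2; simp only [htm_def] at h4; linarith
      exact (continuousAt_const.mul (h2.rpow_const (Or.inl h3))).continuousWithinAt
    have hDint : IntervalIntegrable (fun s => E0 * (tn - s)^(-(1+α))) volume 0 tm :=
      hDcont.intervalIntegrable
    have hbd : ∀ᵐ s ∂(volume.restrict (Set.uIoc (0:ℝ) tm)), ‖e s‖ ≤ E0 * (tn - s)^(-(1+α)) := by
      apply ae_restrict_of_forall_mem measurableSet_uIoc
      intro s hs
      rw [Set.uIoc_of_le htm0] at hs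
      have hs' : s ∈ Icc (0:ℝ) tn := ⟨hs.1.le, le_trans hs.2 htmtn⟩
      rw [Real.norm_eq_abs, (by simp only [he_def] : e s = (Iy s - y s) * K s), abs_mul,
        abs_of_nonneg (hKnn s hs')]
      have h6 := mul_le_mul_of_nonneg_right (hE1 s hs') (hKnn s hs')
      simpa only [hK_def] using h6
    have hkey := intervalIntegral.norm_integral_le_of_norm_le htm0
      ((ae_restrict_iff' measurableSet_Ioc).1 (by rwa [Set.uIoc_of_le htm0] at hbd)) hDint
    rw [Real.norm_eq_abs] at hkey
    apply le_trans hkey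
    rw [intervalIntegral.integral_const_mul]
    have hcomp : (∫ s in (0:ℝ)..tm, (tn - s)^(-(1+α))) = ∫ u in τ..tn, u^(-(1+α)) := by
      rw [integral_comp_sub_left (fun u : ℝ => u^(-(1+α))) tn]
      congr 1
      · simp only [htm_def]; ring
      · simp
    rw [hcomp, integral_rpow (Or.inr ⟨by intro hcc; linarith,
      by rw [Set.uIcc_of_le hτtn]; rintro ⟨h1, -⟩; linarith⟩)]
    rw [show -(1+α)+1 = -α by ring]
    have h7 : (tn^(-α) - τ^(-α))/(-α) = (τ^(-α) - tn^(-α))/α := by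
      rw [div_neg, ← neg_div, neg_sub]
    have hmono : tn^(-α) ≤ τ^(-α) :=
      Real.rpow_le_rpow_of_nonpos hτ hτtn (by linarith)
    rw [h7]
  -- second piece
  have hI2 : |∫ s in tm..tn, e s| ≤ c2 * (τ^(2-α) / ((1-α)*(2-α))) := by
    set D2 : ℝ → ℝ := fun s => c2 * (τ * (tn - s)^(-α) - (tn - s)^(1-α)) with hD2_def
    have hD2int : IntervalIntegrable D2 volume tm tn := by
      simp only [hD2_def]
      exact ((((hKD (-α) (by linarith)).const_mul τ).sub
        (hKD (1-α) (by linarith))).mono_set hsub2).const_mul c2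
    have hbd : ∀ᵐ s ∂(volume.restrict (Set.uIoc tm tn)), ‖e s‖ ≤ D2 s := by
      apply ae_restrict_of_forall_mem measurableSet_uIoc
      intro s hs
      rw [Set.uIoc_of_le htmtn] at hs
      have hs0 : (0:ℝ) ≤ s := le_trans htm0 hs.1.le
      have hstn : s ≤ tn := hs.2
      have hs' : s ∈ Icc (0:ℝ) tn := ⟨hs0, hstn⟩
      have hD2eq : D2 s = c2 * ((s - tm) * (tn - s)^(-α)) := by
        simp only [hD2_def]
        have h7 : s - tm = τ - (tn - s) := by simp only [htm_def]; ring
        rw [h7, sub_mul, hpow2 (tn - s) (by linarith)]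
      rw [hD2eq, Real.norm_eq_abs]
      rcases eq_or_lt_of_le hstn with hseq | hslt
      · rw [hseq]
        have he0 : e tn = 0 := by
          simp only [he_def]; rw [hIytn, sub_self, zero_mul]
        rw [he0, abs_zero, sub_self, Real.zero_rpow (by linarith : -α ≠ 0), mul_zero, mul_zero]
      · have hend1 : ((n-1:ℕ):ℝ)*τ = tm := by
          rw [Nat.cast_sub hn, Nat.cast_one]
          simp only [htm_def, htn_def]; ring
        have hend2 : (((n-1:ℕ):ℝ)+1)*τ = tn := by
          rw [Nat.cast_sub hn, Nat.cast_one]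
          simp only [htn_def]; ring
        have hmem : s ∈ Ico (((n-1:ℕ):ℝ)*τ) ((((n-1:ℕ):ℝ)+1)*τ) := by
          rw [hend1, hend2]; exact ⟨hs.1.le, hslt⟩
        have h8 := herr (n-1) (by omega) s hmem
        rw [hend1, hend2] at h8
        calc |e s| = |Iy s - y s| * K s := by
              simp only [he_def]; rw [abs_mul, abs_of_nonneg (hKnn s hs')]
          _ ≤ (c2 * ((s - tm)*(tn - s))) * K s :=
              mul_le_mul_of_nonneg_right h8 (hKnn s hs')
          _ = c2 * ((s - tm) * (tn - s)^(-α)) := by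
              simp only [hK_def]
              rw [show c2 * ((s - tm)*(tn - s)) * (tn - s)^(-(1+α))
                  = c2 * ((s - tm) * ((tn - s) * (tn - s)^(-(1+α)))) by ring,
                hpow1 (tn - s) (by linarith)]
    have hkey := intervalIntegral.norm_integral_le_of_norm_le htmtn
      ((ae_restrict_iff' measurableSet_Ioc).1 (by rwa [Set.uIoc_of_le htmtn] at hbd)) hD2int
    rw [Real.norm_eq_abs] at hkey
    apply le_trans hkey
    have hτa : τ * τ^(1-α) = τ^(2-α) := by
      rw [show (2:ℝ)-α = 1 + (1-α) by ring, Real.rpow_add hτ, Real.rpow_one]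
    have hc1 : (∫ s in tm..tn, (tn - s)^(-α)) = τ^(1-α)/(1-α) := by
      rw [integral_comp_sub_left (fun u : ℝ => u^(-α)) tn]
      rw [show tn - tn = (0:ℝ) by ring, show tn - tm = τ by simp only [htm_def]; ring]
      rw [integral_rpow (Or.inl (by linarith))]
      rw [Real.zero_rpow (by linarith : -α + 1 ≠ 0), show -α + 1 = 1 - α by ring]
      ring
    have hc2' : (∫ s in tm..tn, (tn - s)^(1-α)) = τ^(2-α)/(2-α) := by
      rw [integral_comp_sub_left (fun u : ℝ => u^(1-α)) tn]
      rw [show tn - tn = (0:ℝ) by ring, show tn - tm = τ by simp only [htm_def]; ring]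
      rw [integral_rpow (Or.inl (by linarith))]
      rw [Real.zero_rpow (by linarith : (1:ℝ) - α + 1 ≠ 0), show (1:ℝ) - α + 1 = 2 - α by ring]
      ring
    have hval : (∫ s in tm..tn, D2 s) = c2 * (τ^(2-α)/((1-α)*(2-α))) := by
      simp only [hD2_def]
      rw [intervalIntegral.integral_const_mul, integral_sub
        (((hKD (-α) (by linarith)).const_mul τ).mono_set hsub2)
        ((hKD (1-α) (by linarith)).mono_set hsub2)]
      rw [intervalIntegral.integral_const_mul, hc1, hc2']
      have h9 : τ * (τ^(1-α)/(1-α)) = τ^(2-α)/(1-α) := by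
        rw [← hτa]; ring
      rw [h9]
      congr 1
      have h1ne : (1:ℝ)-α ≠ 0 := by linarith
      have h2ne : (2:ℝ)-α ≠ 0 := by linarith
      field_simp
      ring
    rw [hval]
  -- combine
  have hfinal : |caputo α y tn - caputo α Iy tn|
      ≤ (α / Real.Gamma (1-α)) * (E0 * ((τ^(-α) - tn^(-α))/α)
          + c2 * (τ^(2-α)/((1-α)*(2-α)))) := by
    rw [hcap, hsplit, hadd, abs_mul,
      abs_of_nonneg (by positivity : (0:ℝ) ≤ α / Real.Gamma (1-α))]
    apply mul_le_mul_of_nonneg_left _ (by positivity)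
    exact (abs_add_le _ _).trans (add_le_add hI1 hI2)
  apply le_trans hfinal
  have hβ1ne : β + 1 ≠ 0 := by linarith
  have hΓ3 : Real.Gamma (3-α) = (2-α)*((1-α)*Real.Gamma (1-α)) := by
    rw [show (3:ℝ)-α = (2-α)+1 by ring, Real.Gamma_add_one (by linarith),
      show (2:ℝ)-α = (1-α)+1 by ring, Real.Gamma_add_one (by linarith)]
  have htn_pow : tn^(-α) = (n:ℝ)^(-α) * τ^(-α) := by
    simp only [htn_def]; exact Real.mul_rpow (by positivity) hτ.le
  have hr1 : τ^(1+β) * τ^(-α) = τ^(1+β-α) := by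
    rw [← Real.rpow_add hτ]
    congr 1
    try ring
  have hterm1 : (α / Real.Gamma (1-α)) * (E0 * ((τ^(-α) - tn^(-α))/α))
      = (1 - (n:ℝ)^(-α)) / (4*(β+1)*Real.Gamma (1-α)) * H * τ^(1+β-α) := by
    rw [htn_pow]
    simp only [hE0_def]
    rw [← hr1]
    field_simp
  have h1ne : (1:ℝ)-α ≠ 0 := by linarith
  have h2ne : (2:ℝ)-α ≠ 0 := by linarith
  have hr2 : τ^β * τ^(2-α) = τ * τ^(1+β-α) := by
    have ha : τ^β * τ^(2-α) = τ^(β+(2-α)) := (Real.rpow_add hτ β (2-α)).symm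
    have hb : τ * τ^(1+β-α) = τ^(1+(1+β-α)) := by
      rw [Real.rpow_add hτ, Real.rpow_one]
    rw [ha, hb]
    congr 1
    ring
  have hc2τ : c2 * (τ^(2-α)/((1-α)*(2-α)))
      = H * τ^(1+β-α) / ((β+1)*((1-α)*(2-α))) := by
    simp only [hc2_def]
    rw [div_mul_div_comm, mul_assoc H, hr2]
    field_simp
  have hterm2 : (α / Real.Gamma (1-α)) * (c2 * (τ^(2-α)/((1-α)*(2-α))))
      ≤ α / Real.Gamma (3-α) * H * τ^(1+β-α) := by
    have h10 : (α / Real.Gamma (1-α)) * (c2 * (τ^(2-α)/((1-α)*(2-α))))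
        = (1/(β+1)) * (α / Real.Gamma (3-α) * H * τ^(1+β-α)) := by
      rw [hc2τ, hΓ3]
      field_simp
    rw [h10]
    apply mul_le_of_le_one_left
    · have hΓ3pos : 0 < Real.Gamma (3-α) := Real.Gamma_pos_of_pos (by linarith)
      exact mul_nonneg (mul_nonneg (div_nonneg hα0.le hΓ3pos.le) hH)
        (Real.rpow_nonneg hτ.le _)
    · rw [div_le_one (by linarith)]
      linarith
  calc (α / Real.Gamma (1-α)) * (E0 * ((τ^(-α) - tn^(-α))/α)
          + c2 * (τ^(2-α)/((1-α)*(2-α))))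
      = (α / Real.Gamma (1-α)) * (E0 * ((τ^(-α) - tn^(-α))/α))
        + (α / Real.Gamma (1-α)) * (c2 * (τ^(2-α)/((1-α)*(2-α)))) := by ring
    _ ≤ (1 - (n:ℝ)^(-α)) / (4*(β+1)*Real.Gamma (1-α)) * H * τ^(1+β-α)
        + α / Real.Gamma (3-α) * H * τ^(1+β-α) := add_le_add (le_of_eq hterm1) hterm2
    _ = ((1 - (n : ℝ) ^ (-α)) / (4 * (β + 1) * Real.Gamma (1 - α))
          + α / Real.Gamma (3 - α)) * H * τ ^ (1 + β - α) := by ring
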